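/- arXiv:2510.23457 — 3 statements merged into one kernel-verified Lean document; each statement's English description precedes it below -/
import Mathlib

section
/- Let q be a prime number, let G be a commutative group, and let g ∈ G have order q; for x ∈ ZMod q write g^x for g raised to the natural-number representative of x. Let k ≥ 1, let sk₀, h₁,…,h_k, r₁,…,r_k ∈ ZMod q, and define sk_ℓ = sk_{ℓ−1}·h_ℓ + r_ℓ for ℓ = 1,…,k. Set PK₀ = g^{sk₀} and Q_ℓ = g^{r_ℓ} for each ℓ. Then g^{sk_k} = (∏_{ℓ=1}^{k−1} Q_ℓ^{∏_{ω=ℓ+1}^{k} h_ω}) · Q_k · PK₀^{∏_{ℓ=1}^{k} h_ℓ}. -/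
section Aux

variable {q : ℕ} [NeZero q] {G : Type*} [CommGroup G] {g : G}

private lemma borg_pow_val_add (hg : orderOf g = q) (a b : ZMod q) :
    g ^ (a + b).val = g ^ a.val * g ^ b.val := by
  subst hg
  rw [ZMod.val_add, pow_mod_orderOf, pow_add]

private lemma borg_pow_val_mul (hg : orderOf g = q) (a b : ZMod q) :
    g ^ (a * b).val = (g ^ a.val) ^ b.val := by
  subst hg
  rw [ZMod.val_mul, pow_mod_orderOf, pow_mul]

private lemma borg_pow_val_sum (hg : orderOf g = q) {ι : Type*} (s : Finset ι)
    (a : ι → ZMod q) :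
    g ^ (∑ i ∈ s, a i).val = ∏ i ∈ s, g ^ (a i).val := by
  classical
  induction s using Finset.induction with
  | empty => simp
  | insert _ _ hmem ih =>
      rw [Finset.sum_insert hmem, borg_pow_val_add hg, ih, Finset.prod_insert hmem]

set_option linter.unusedSectionVars false in
private lemma borg_arith (k : ℕ) (hk : 1 ≤ k) (sk h r : ℕ → ZMod q)
    (hrec : ∀ ℓ : ℕ, sk (ℓ + 1) = sk ℓ * h (ℓ + 1) + r (ℓ + 1)) :
    sk k = (∑ ℓ ∈ Finset.Icc 1 (k - 1), r ℓ * ∏ ω ∈ Finset.Icc (ℓ + 1) k, h ω)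
      + r k + sk 0 * ∏ ℓ ∈ Finset.Icc 1 k, h ℓ := by
  induction k with
  | zero => omega
  | succ n ih =>
    rcases Nat.lt_or_ge n 1 with h1 | h1
    · interval_cases n
      simp [hrec 0]
      ring
    · have key := ih h1
      rw [hrec n, key]
      have hsn : n + 1 - 1 = n := by omega
      rw [hsn]
      have hsplit : Finset.Icc 1 n = insert n (Finset.Icc 1 (n - 1)) := by
        ext x
        simp only [Finset.mem_Icc, Finset.mem_insert]
        omega
      have hnot : n ∉ Finset.Icc 1 (n - 1) := by simp; omega
      have hprod1 : ∀ ℓ ∈ Finset.Icc 1 (n - 1),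
          r ℓ * (∏ ω ∈ Finset.Icc (ℓ + 1) (n + 1), h ω)
            = r ℓ * (∏ ω ∈ Finset.Icc (ℓ + 1) n, h ω) * h (n + 1) := by
        intro ℓ hℓ
        simp only [Finset.mem_Icc] at hℓ
        rw [Finset.prod_Icc_succ_top (by omega) h]
        ring
      have hsum : (∑ ℓ ∈ Finset.Icc 1 n, r ℓ * ∏ ω ∈ Finset.Icc (ℓ + 1) (n + 1), h ω)
          = (∑ ℓ ∈ Finset.Icc 1 (n - 1), r ℓ * ∏ ω ∈ Finset.Icc (ℓ + 1) n, h ω) * h (n + 1)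
            + r n * h (n + 1) := by
        rw [hsplit, Finset.sum_insert hnot, Finset.sum_congr rfl hprod1,
            Finset.Icc_self, Finset.prod_singleton, ← Finset.sum_mul]
        ring
      rw [hsum, Finset.prod_Icc_succ_top (by omega : 1 ≤ n + 1) h]
      ring

end Aux

/-- Key relation `g^{sk_k} = (∏_{ℓ=1}^{k-1} Q_ℓ^{∏_{ω=ℓ+1}^{k} h_ω}) · Q_k · PK₀^{∏_{ℓ=1}^{k} h_ℓ}`
used in the correctness proof of BORG verification, where `g^x` for `x : ZMod q` denotes
`g ^ x.val` and `g` has order `q`. -/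
theorem borg_hierarchical_public_key_relation
    (q : ℕ) (hq : q.Prime) (G : Type*) [CommGroup G] (g : G) (hg : orderOf g = q)
    (k : ℕ) (hk : 1 ≤ k) (sk h r : ℕ → ZMod q)
    (hrec : ∀ ℓ : ℕ, sk (ℓ + 1) = sk ℓ * h (ℓ + 1) + r (ℓ + 1)) :
    g ^ (sk k).val =
      (∏ ℓ ∈ Finset.Icc 1 (k - 1),
          (g ^ (r ℓ).val) ^ (∏ ω ∈ Finset.Icc (ℓ + 1) k, h ω).val) *
        (g ^ (r k).val) *
        (g ^ (sk 0).val) ^ (∏ ℓ ∈ Finset.Icc 1 k, h ℓ).val := by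
  haveI : NeZero q := ⟨hq.ne_zero⟩
  rw [borg_arith k hk sk h r hrec, borg_pow_val_add hg, borg_pow_val_add hg,
      borg_pow_val_sum hg, borg_pow_val_mul hg]
  congr 1
  congr 1
  exact Finset.prod_congr rfl fun ℓ _ => borg_pow_val_mul hg _ _
end

section
/- Let q be a prime number, let G be a commutative group, and let g ∈ G have order q; for x ∈ ZMod q write g^x for g raised to the natural-number representative of x. Let k ≥ 1, let sk₀, h₁,…,h_k, r₁,…,r_k ∈ ZMod q, define sk_ℓ = sk_{ℓ−1}·h_ℓ + r_ℓ for ℓ = 1,…,k, and set PK₀ = g^{sk₀} and Q_ℓ = g^{r_ℓ}. Let t, β, n be natural numbers with 0 < t ≤ β ≤ n < q, let S ⊆ {1,…,n} with |S| = β, and let f be a polynomial over ZMod q with degree strictly less than t and f(0) = sk_k. For i ∈ S define λ_i = ∏_{j ∈ S, j ≠ i} (j)·(j − i)⁻¹ in ZMod q. Let h ∈ ZMod q and for each i ∈ S let d_i, e_i, ρ_i ∈ ZMod q; define R_i = g^{d_i + e_i·ρ_i}, R = ∏_{i∈S} R_i, z_i = d_i + e_i·ρ_i + λ_i·f(i)·h,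 and z = Σ_{i∈S} z_i. Then the verification equation holds: g^z = R · ((∏_{ℓ=1}^{k−1} Q_ℓ^{∏_{ω=ℓ+1}^{k} h_ω}) · Q_k · PK₀^{∏_{ℓ=1}^{k} h_ℓ})^{h}. -/
/-- Correctness of BORG signature verification: an honestly generated threshold signature
`(R, z)`, produced by a set `S` of `β` participants (with `t ≤ β ≤ n < q`) holding Shamir
shares `f(i)` of the hierarchical level-`k` secret key `sk k`, satisfies the verification
equation `g^z = R · ((∏_{ℓ=1}^{k−1} Q_ℓ^{∏_{ω=ℓ+1}^{k} hh_ω}) · Q_k · PK₀^{∏_{ℓ=1}^{k} hh_ℓ})^c`.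
Here `g` has order `q` and exponentiation by `x : ZMod q` means `g ^ x.val`. -/
theorem borg_verification_correctness
    (q : ℕ) (hq : q.Prime) (G : Type*) [CommGroup G] (g : G) (hg : orderOf g = q)
    (k : ℕ) (hk : 1 ≤ k) (sk hh r : ℕ → ZMod q)
    (hrec : ∀ ℓ : ℕ, sk (ℓ + 1) = sk ℓ * hh (ℓ + 1) + r (ℓ + 1))
    (t β n : ℕ) (ht : 0 < t) (htβ : t ≤ β) (hβn : β ≤ n) (hnq : n < q)
    (S : Finset ℕ) (hS : S ⊆ Finset.Icc 1 n) (hcard : S.card = β)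
    (f : Polynomial (ZMod q)) (hfdeg : f.degree < t) (hf0 : f.eval 0 = sk k)
    (lam : ℕ → ZMod q)
    (hlam : ∀ i ∈ S, lam i =
      ∏ j ∈ S.erase i, (j : ZMod q) * ((j : ZMod q) - (i : ZMod q))⁻¹)
    (c : ZMod q) (d e ρ : ℕ → ZMod q)
    (z : ZMod q)
    (hz : z = ∑ i ∈ S, (d i + e i * ρ i + lam i * f.eval (i : ZMod q) * c)) :
    g ^ z.val =
      (∏ i ∈ S, g ^ (d i + e i * ρ i).val) *
        ((∏ ℓ ∈ Finset.Icc 1 (k - 1),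
              (g ^ (r ℓ).val) ^ (∏ ω ∈ Finset.Icc (ℓ + 1) k, hh ω).val) *
            (g ^ (r k).val) *
            (g ^ (sk 0).val) ^ (∏ ℓ ∈ Finset.Icc 1 k, hh ℓ).val) ^ c.val := by
  haveI := Fact.mk hq
  haveI : NeZero q := ⟨hq.pos.ne'⟩
  -- exponent homomorphism lemmas
  have hadd : ∀ a b : ZMod q, g ^ (a + b).val = g ^ a.val * g ^ b.val := by
    intro a b
    rw [← pow_add]
    conv_rhs => rw [← pow_mod_orderOf]
    rw [hg, ZMod.val_add]
  have hmul : ∀ a b : ZMod q, g ^ (a * b).val = (g ^ a.val) ^ b.val := by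
    intro a b
    rw [← pow_mul]
    conv_rhs => rw [← pow_mod_orderOf]
    rw [hg, ZMod.val_mul]
  have hpowsum : ∀ (T : Finset ℕ) (u : ℕ → ZMod q),
      g ^ (∑ i ∈ T, u i).val = ∏ i ∈ T, g ^ (u i).val := by
    intro T u
    induction T using Finset.cons_induction with
    | empty => simp [ZMod.val_zero]
    | cons a T ha ih => rw [Finset.sum_cons, Finset.prod_cons, hadd, ih]
  -- Lagrange interpolation: ∑ lam i * f(i) = f(0) = sk k
  have hlt : ∀ m ∈ S, m < q := fun m hm =>
    lt_of_le_of_lt (Finset.mem_Icc.mp (hS hm)).2 hnq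
  have hvs : Set.InjOn (fun i : ℕ => (i : ZMod q)) ↑S := by
    intro i hi j hj hij
    have h1 := congrArg ZMod.val hij
    simpa [ZMod.val_cast_of_lt (hlt i hi), ZMod.val_cast_of_lt (hlt j hj)] using h1
  have hdegS : f.degree < (S.card : WithBot ℕ) := by
    refine lt_of_lt_of_le hfdeg ?_
    exact_mod_cast (htβ.trans_eq hcard.symm)
  have hbasis : ∀ i ∈ S, (Lagrange.basis S (fun i : ℕ => (i : ZMod q)) i).eval 0 = lam i := by
    intro i hi
    rw [hlam i hi, Lagrange.basis, Polynomial.eval_prod]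
    refine Finset.prod_congr rfl fun j hj => ?_
    simp only [Lagrange.basisDivisor, Polynomial.eval_mul, Polynomial.eval_C,
      Polynomial.eval_sub, Polynomial.eval_X]
    rw [show ((j : ZMod q) - (i : ZMod q))⁻¹ = (-((i:ZMod q) - (j:ZMod q)))⁻¹ by rw [neg_sub],
      inv_neg]
    ring
  have hinterp : ∑ i ∈ S, lam i * f.eval (i : ZMod q) = sk k := by
    have key := Lagrange.eq_interpolate (v := fun i : ℕ => (i : ZMod q)) hvs hdegS
    have h0 := congrArg (Polynomial.eval 0) key
    rw [Lagrange.interpolate_apply, Polynomial.eval_finset_sum] at h0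
    rw [← hf0, h0]
    refine Finset.sum_congr rfl fun i hi => ?_
    rw [Polynomial.eval_mul, Polynomial.eval_C, hbasis i hi, mul_comm]
  -- telescoping of the hierarchical secret key
  have htel : ∀ m : ℕ, sk m = sk 0 * ∏ ℓ ∈ Finset.Icc 1 m, hh ℓ +
      ∑ ℓ ∈ Finset.Icc 1 m, r ℓ * ∏ ω ∈ Finset.Icc (ℓ + 1) m, hh ω := by
    intro m
    induction m with
    | zero => simp
    | succ m ih =>
      rw [hrec m, ih, Finset.prod_Icc_succ_top (Nat.succ_le_succ (Nat.zero_le m)),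
        Finset.sum_Icc_succ_top (Nat.succ_le_succ (Nat.zero_le m))]
      have hIcc : Finset.Icc (m + 1 + 1) (m + 1) = ∅ :=
        Finset.Icc_eq_empty (by omega)
      rw [hIcc, Finset.prod_empty, mul_one]
      have hsum' : ∀ ℓ ∈ Finset.Icc 1 m,
          r ℓ * ∏ ω ∈ Finset.Icc (ℓ + 1) (m + 1), hh ω =
          r ℓ * (∏ ω ∈ Finset.Icc (ℓ + 1) m, hh ω) * hh (m + 1) := by
        intro ℓ hℓ
        have hℓm := (Finset.mem_Icc.mp hℓ).2
        rw [Finset.prod_Icc_succ_top (by omega : ℓ + 1 ≤ m + 1), ← mul_assoc]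
      rw [Finset.sum_congr rfl hsum', add_mul, Finset.sum_mul]
      ring
  -- rewrite z
  have hz' : z = (∑ i ∈ S, (d i + e i * ρ i)) + sk k * c := by
    rw [hz, Finset.sum_add_distrib, ← Finset.sum_mul, hinterp]
  -- express g ^ sk k
  have hskk : g ^ (sk k).val =
      (∏ ℓ ∈ Finset.Icc 1 k, (g ^ (r ℓ).val) ^ (∏ ω ∈ Finset.Icc (ℓ + 1) k, hh ω).val) *
        (g ^ (sk 0).val) ^ (∏ ℓ ∈ Finset.Icc 1 k, hh ℓ).val := by
    rw [htel k, hadd, hmul, hpowsum, mul_comm]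
    congr 1
    exact Finset.prod_congr rfl fun ℓ _ => hmul _ _
  -- split off the top term of the product over Icc 1 k
  obtain ⟨k', rfl⟩ : ∃ k', k = k' + 1 := ⟨k - 1, (Nat.succ_pred_eq_of_pos hk).symm⟩
  have hsplit : (∏ ℓ ∈ Finset.Icc 1 (k' + 1),
      (g ^ (r ℓ).val) ^ (∏ ω ∈ Finset.Icc (ℓ + 1) (k' + 1), hh ω).val) =
      (∏ ℓ ∈ Finset.Icc 1 (k' + 1 - 1),
        (g ^ (r ℓ).val) ^ (∏ ω ∈ Finset.Icc (ℓ + 1) (k' + 1), hh ω).val) * g ^ (r (k' + 1)).val := by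
    rw [Finset.prod_Icc_succ_top (Nat.succ_le_succ (Nat.zero_le k'))]
    have hIcc : Finset.Icc (k' + 1 + 1) (k' + 1) = ∅ := Finset.Icc_eq_empty (by omega)
    simp [hIcc, ZMod.val_one, hq.one_lt]
  rw [hz', hadd, hpowsum, hmul, hskk, hsplit]
end

section
/- Let q be a prime number, let G be a commutative group, and let g ∈ G have order q; for x ∈ ZMod q write g^x for g raised to the natural-number representative of x. Let s, h, r ∈ ZMod q and set sk = s·h + r. Let t ≥ 1 and let λ_i, a_i ∈ ZMod q for i = 1,…,t satisfy Σ_{i=1}^{t} λ_i·a_i = sk. Set PK_i = g^{a_i} and Q = g^{r}. Then ∏_{i=1}^{t} PK_i^{λ_i} = g^{h·s} · Q. -/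
/-- Completeness of the key check in BORG.PoFVerify: if `sk = s·h + r` and the shares
`a_i` reconstruct `sk` via Lagrange coefficients `λ_i` (i.e. `Σ λ_i·a_i = sk`), then
with `PK_i = g^{a_i}` and `Q = g^{r}` one has `∏ PK_i^{λ_i} = g^{h·s} · Q`.
Exponentiation by `x : ZMod q` means raising to `x.val`, and `g` has order `q`. -/
theorem borg_pof_key_check_completeness
    (q : ℕ) (hq : q.Prime) (G : Type*) [CommGroup G] (g : G) (hg : orderOf g = q)
    (s h r : ZMod q) (t : ℕ) (ht : 1 ≤ t) (lam a : ℕ → ZMod q)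
    (hrecon : ∑ i ∈ Finset.Icc 1 t, lam i * a i = s * h + r) :
    ∏ i ∈ Finset.Icc 1 t, (g ^ (a i).val) ^ (lam i).val =
      g ^ (h * s).val * g ^ r.val := by
  haveI : NeZero q := ⟨hq.ne_zero⟩
  have hmod : ∀ n : ℕ, g ^ (n % q) = g ^ n := by
    intro n
    conv_rhs => rw [← Nat.div_add_mod n q]
    rw [pow_add, pow_mul, ← hg, pow_orderOf_eq_one, one_pow, one_mul]
  have hadd : ∀ x y : ZMod q, g ^ (x + y).val = g ^ x.val * g ^ y.val := by
    intro x y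
    rw [ZMod.val_add, hmod, pow_add]
  have hmul : ∀ x y : ZMod q, (g ^ x.val) ^ y.val = g ^ (x * y).val := by
    intro x y
    rw [← pow_mul, ZMod.val_mul, hmod]
  have hsum : ∀ (f : ℕ → ZMod q) (sset : Finset ℕ),
      g ^ (∑ i ∈ sset, f i).val = ∏ i ∈ sset, g ^ (f i).val := by
    intro f sset
    induction sset using Finset.induction_on with
    | empty => simp [ZMod.val_zero]
    | insert _ _ hx ih => rw [Finset.sum_insert hx, Finset.prod_insert hx, hadd, ih]
  calc ∏ i ∈ Finset.Icc 1 t, (g ^ (a i).val) ^ (lam i).val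
      = ∏ i ∈ Finset.Icc 1 t, g ^ ((a i) * (lam i)).val := by
        exact Finset.prod_congr rfl fun i _ => hmul _ _
    _ = g ^ (∑ i ∈ Finset.Icc 1 t, a i * lam i).val := (hsum _ _).symm
    _ = g ^ (h * s + r).val := by
        rw [show (∑ i ∈ Finset.Icc 1 t, a i * lam i) = h * s + r by
          rw [mul_comm h s, ← hrecon]; exact Finset.sum_congr rfl fun i _ => mul_comm _ _]
    _ = g ^ (h * s).val * g ^ r.val := hadd _ _
end
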